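/- Let {A, B, C, D} be a polyphase GCA quad in which A and B have size s_1×⋯×s_i×⋯×s_r and C and D have size s_1×⋯×s_i'×⋯×s_r (for a fixed dimension index i), and let {I, J} be a polyphase GCA pair of size t_1×⋯×t_r. Define A' = A | 0_{s_i'}, B' = B | 0_{s_i'}, C' = 0_{s_i} | C, and D' = 0_{s_i} | D, concatenating in the i-th dimension with zero arrays of the indicated extent, so that A', B', C', D' have size s_1×⋯×(s_i+s_i')×⋯×s_r. Define E = A'⊗I + C'⊗J, F = A'⊗J* − C'⊗I*, G = B'⊗I + D'⊗J, and H = B'⊗J* − D'⊗I*. Then {E, F, G, H} is a polyphase GCA quad of size s_1t_1×⋯×(s_i+s_i')t_i×⋯×s_rt_r. -/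

import Mathlib

open scoped BigOperators

/-- An `r`-dimensional complex array, as a complex-valued function on ℤ^r. -/
abbrev Arr (r : ℕ) := (Fin r → ℤ) → ℂ

/-- Index tuple `i` lies in the box `[0, s₁) × ⋯ × [0, s_r)`. -/
def InBox {r : ℕ} (s : Fin r → ℕ) (i : Fin r → ℤ) : Prop :=
  ∀ k, 0 ≤ i k ∧ i k < (s k : ℤ)

/-- The array vanishes outside the box of size `s`. -/
def SupportedOn {r : ℕ} (s : Fin r → ℕ) (A : Arr r) : Prop :=
  ∀ i, ¬ InBox s i → A i = 0

/-- Aperiodic autocorrelation of an array. -/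
noncomputable def autocorr {r : ℕ} (A : Arr r) (δ : Fin r → ℤ) : ℂ :=
  ∑ᶠ i : Fin r → ℤ, A i * (starRingEnd ℂ) (A (i - δ))

/-- Weight of an array: the sum of squared moduli of its entries. -/
noncomputable def weight {r : ℕ} (A : Arr r) : ℝ :=
  ∑ᶠ i : Fin r → ℤ, ‖A i‖ ^ 2

/-- Flipped-and-conjugated array `A*`, relative to size `s`. -/
noncomputable def flipConj {r : ℕ} (s : Fin r → ℕ) (A : Arr r) : Arr r :=
  fun i => (starRingEnd ℂ) (A fun k => (s k : ℤ) - 1 - i k)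

/-- Kronecker product of arrays, where `t` is the size of `B`:
`(A ⊗ B)[i·t + j] = A[i]·B[j]`. -/
noncomputable def kron {r : ℕ} (t : Fin r → ℕ) (A B : Arr r) : Arr r :=
  fun i => A (fun k => i k / (t k : ℤ)) * B (fun k => i k % (t k : ℤ))

/-- Concatenation of `X` (of extent `u` in dimension `i0`) and `Y` in dimension `i0`. -/
noncomputable def concat {r : ℕ} (i0 : Fin r) (u : ℕ) (X Y : Arr r) : Arr r :=
  fun v => if v i0 < (u : ℤ) then X v else Y (Function.update v i0 (v i0 - u))

/-- A polyphase array of size `s`: supported on the box and all in-box entries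
are `N`-th roots of unity for some `N`. -/
def IsPolyphase {r : ℕ} (s : Fin r → ℕ) (A : Arr r) : Prop :=
  SupportedOn s A ∧ ∃ N : ℕ, 0 < N ∧ ∀ i, InBox s i → A i ^ N = 1

/-- A binary array of size `s`: all in-box entries are ±1, zero outside. -/
def IsBinary {r : ℕ} (s : Fin r → ℕ) (A : Arr r) : Prop :=
  SupportedOn s A ∧ ∀ i, InBox s i → A i = 1 ∨ A i = -1

/-- Entries are zero or of modulus one, supported on the box of size `s`. -/
def IsUnimodZero {r : ℕ} (s : Fin r → ℕ) (A : Arr r) : Prop :=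
  SupportedOn s A ∧ ∀ i, InBox s i → A i = 0 ∨ ‖A i‖ = 1

/-- Golay complementarity of a pair: `R_A + R_B = (w(A)+w(B))·Δ`. -/
def ComplementaryPair {r : ℕ} (A B : Arr r) : Prop :=
  ∀ δ : Fin r → ℤ, autocorr A δ + autocorr B δ =
    if δ = 0 then ((weight A + weight B : ℝ) : ℂ) else 0

/-- Golay complementarity of a quad: `R_A + R_B + R_C + R_D = (Σ w)·Δ`. -/
def ComplementaryQuad {r : ℕ} (A B C D : Arr r) : Prop :=
  ∀ δ : Fin r → ℤ, autocorr A δ + autocorr B δ + autocorr C δ + autocorr D δ =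
    if δ = 0 then ((weight A + weight B + weight C + weight D : ℝ) : ℂ) else 0


section Helpers

open Finset

variable {r : ℕ}

/-- The box as a finset. -/
noncomputable def box (s : Fin r → ℕ) : Finset (Fin r → ℤ) :=
  Fintype.piFinset fun k => Finset.Ico (0:ℤ) (s k)

lemma mem_box {s : Fin r → ℕ} {i : Fin r → ℤ} : i ∈ box s ↔ InBox s i := by
  unfold _root_.box InBox
  simp [Fintype.mem_piFinset, Finset.mem_Ico]

/-- Cross-correlation. -/
noncomputable def corr (X Y : Arr r) (δ : Fin r → ℤ) : ℂ :=
  ∑ᶠ i : Fin r → ℤ, X i * (starRingEnd ℂ) (Y (i - δ))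

lemma autocorr_eq_corr (A : Arr r) : autocorr A = corr A A := rfl

lemma corr_eq_sum {s : Fin r → ℕ} {X : Arr r} (hX : SupportedOn s X) (Y : Arr r)
    (δ : Fin r → ℤ) :
    corr X Y δ = ∑ i ∈ box s, X i * (starRingEnd ℂ) (Y (i - δ)) := by
  apply finsum_eq_sum_of_support_subset
  intro i hi
  rcases mul_ne_zero_iff.1 hi with ⟨h1, _⟩
  simp only [Finset.coe_sort_coe, Finset.mem_coe, mem_box]
  by_contra hbox
  exact h1 (hX i hbox)

lemma weight_eq_sum {s : Fin r → ℕ} {X : Arr r} (hX : SupportedOn s X) :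
    weight X = ∑ i ∈ box s, ‖X i‖ ^ 2 := by
  apply finsum_eq_sum_of_support_subset
  intro i hi
  have h1 : X i ≠ 0 := by
    intro h; apply hi; simp [h]
  simp only [Finset.mem_coe, mem_box]
  by_contra hbox
  exact h1 (hX i hbox)

lemma weight_cast {s : Fin r → ℕ} {X : Arr r} (hX : SupportedOn s X) :
    ((weight X : ℝ) : ℂ) = autocorr X 0 := by
  rw [weight_eq_sum hX, autocorr_eq_corr, corr_eq_sum hX X 0]
  push_cast
  refine Finset.sum_congr rfl fun i _ => ?_
  rw [sub_zero, Complex.mul_conj]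
  norm_cast
  simp [Complex.normSq_eq_norm_sq]


lemma block_ediv {t m rem : ℤ} (ht : 0 < t) (h0 : 0 ≤ rem) (h1 : rem < t) :
    (t * m + rem) / t = m := by
  rw [add_comm, Int.add_mul_ediv_left _ _ (ne_of_gt ht),
    Int.ediv_eq_zero_of_lt h0 h1, zero_add]

lemma block_emod {t m rem : ℤ} (ht : 0 < t) (h0 : 0 ≤ rem) (h1 : rem < t) :
    (t * m + rem) % t = rem := by
  rw [add_comm, Int.add_mul_emod_self_left, Int.emod_eq_of_lt h0 h1]

lemma supported_mono {s u : Fin r → ℕ} {X : Arr r} (hX : SupportedOn s X)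
    (h : ∀ k, s k ≤ u k) : SupportedOn u X := by
  intro i hi
  apply hX
  intro hbox
  exact hi fun k => ⟨(hbox k).1, lt_of_lt_of_le (hbox k).2 (by exact_mod_cast h k)⟩

lemma supported_add {s : Fin r → ℕ} {X Y : Arr r} (hX : SupportedOn s X)
    (hY : SupportedOn s Y) : SupportedOn s (fun i => X i + Y i) := by
  intro i hi; dsimp only; rw [hX i hi, hY i hi, add_zero]

lemma supported_sub {s : Fin r → ℕ} {X Y : Arr r} (hX : SupportedOn s X)
    (hY : SupportedOn s Y) : SupportedOn s (fun i => X i - Y i) := by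
  intro i hi; dsimp only; rw [hX i hi, hY i hi, sub_zero]

lemma flipConj_supported {t : Fin r → ℕ} {P : Arr r} (hP : SupportedOn t P) :
    SupportedOn t (flipConj t P) := by
  intro i hi
  unfold flipConj
  rw [hP _ ?_, map_zero]
  intro hbox
  apply hi
  intro k
  have := hbox k
  dsimp only at this
  omega

lemma kron_supported {u t : Fin r → ℕ} {X P : Arr r} (hX : SupportedOn u X)
    (hP : SupportedOn t P) : SupportedOn (fun k => u k * t k) (kron t X P) := by
  intro i hi
  by_contra hne
  have hq : InBox u (fun k => i k / (t k : ℤ)) := by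
    by_contra h
    exact hne (by unfold kron; rw [hX _ h, zero_mul])
  have hj : InBox t (fun k => i k % (t k : ℤ)) := by
    by_contra h
    exact hne (by unfold kron; rw [hP _ h, mul_zero])
  apply hi
  intro k
  have h1 := hq k
  have h2 := hj k
  dsimp only at h1 h2
  obtain ⟨ha, hb⟩ := h1
  obtain ⟨hc, hd⟩ := h2
  have heq := Int.mul_ediv_add_emod (i k) (t k)
  have ht : (0:ℤ) < t k := by omega
  push_cast
  constructor
  · nlinarith
  · nlinarith

lemma pow_one_of_dvd {x : ℂ} {a b : ℕ} (h : x ^ a = 1) (hd : a ∣ b) : x ^ b = 1 := by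
  obtain ⟨c, rfl⟩ := hd
  rw [pow_mul, h, one_pow]

lemma conj_pow_one {x : ℂ} {a : ℕ} (h : x ^ a = 1) : (starRingEnd ℂ) x ^ a = 1 := by
  rw [← map_pow, h, map_one]


/-- The coordinatewise flip `i ↦ t - 1 - i` as an equivalence. -/
def flipEquiv (t : Fin r → ℕ) : (Fin r → ℤ) ≃ (Fin r → ℤ) where
  toFun i := fun k => (t k : ℤ) - 1 - i k
  invFun i := fun k => (t k : ℤ) - 1 - i k
  left_inv i := by funext k; dsimp; ring
  right_inv i := by funext k; dsimp; ring

/-- Translation equivalence. -/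
def shiftEquiv (d : Fin r → ℤ) : (Fin r → ℤ) ≃ (Fin r → ℤ) where
  toFun i := i + d
  invFun i := i - d
  left_inv i := by funext k; simp
  right_inv i := by funext k; simp

lemma corr_flipConj {t : Fin r → ℕ} (P Q : Arr r) (ψ : Fin r → ℤ) :
    corr (flipConj t P) (flipConj t Q) ψ = corr Q P ψ := by
  unfold corr flipConj
  calc (∑ᶠ i : Fin r → ℤ, (starRingEnd ℂ) (P fun k => (t k : ℤ) - 1 - i k) *
          (starRingEnd ℂ) ((starRingEnd ℂ) (Q fun k => (t k : ℤ) - 1 - (i - ψ) k)))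
      = ∑ᶠ i : Fin r → ℤ, (starRingEnd ℂ) (P (flipEquiv t i)) * Q (flipEquiv t i + ψ) := by
        refine finsum_congr fun i => ?_
        rw [Complex.conj_conj]
        congr 2
        all_goals
          funext k
          simp only [flipEquiv, Equiv.coe_fn_mk, Pi.sub_apply, Pi.add_apply]
          try ring
    _ = ∑ᶠ m : Fin r → ℤ, (starRingEnd ℂ) (P m) * Q (m + ψ) :=
        finsum_comp_equiv (flipEquiv t)
          (f := fun m : Fin r → ℤ => (starRingEnd ℂ) (P m) * Q (m + ψ))
    _ = ∑ᶠ i : Fin r → ℤ, Q i * (starRingEnd ℂ) (P (i - ψ)) := by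
        rw [← finsum_comp_equiv (shiftEquiv ψ)
          (f := fun i : Fin r → ℤ => Q i * (starRingEnd ℂ) (P (i - ψ)))]
        refine finsum_congr fun m => ?_
        have h1 : shiftEquiv ψ m = m + ψ := rfl
        rw [h1]
        have h2 : m + ψ - ψ = m := by funext k; simp
        rw [h2, mul_comm]

lemma corr_translate {i0 : Fin r} {c : ℤ} (X Y : Arr r) (δ : Fin r → ℤ) :
    corr (fun v => X (Function.update v i0 (v i0 - c)))
      (fun v => Y (Function.update v i0 (v i0 - c))) δ = corr X Y δ := by
  unfold corr
  have key : ∀ v : Fin r → ℤ, Function.update v i0 (v i0 - c) =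
      v + fun k => if k = i0 then -c else 0 := by
    intro v
    funext k
    by_cases hk : k = i0
    · subst hk; simp [sub_eq_add_neg]
    · simp [Function.update_apply, hk]
  rw [← finsum_comp_equiv (shiftEquiv (fun k => if k = i0 then -c else 0))
    (f := fun i : Fin r → ℤ => X i * (starRingEnd ℂ) (Y (i - δ)))]
  refine finsum_congr fun v => ?_
  have h0 : shiftEquiv (fun k => if k = i0 then -c else 0) v =
      v + fun k => if k = i0 then -c else 0 := rfl
  have h1 : Function.update (v - δ) i0 ((v - δ) i0 - c) =
      (v + fun k => if k = i0 then -c else 0) - δ := by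
    rw [key (v - δ)]
    funext k
    simp [Pi.sub_apply, Pi.add_apply]
    ring
  dsimp only
  rw [h0, key v, h1]

lemma corr_add4 {s : Fin r → ℕ} {X₁ X₂ Y₁ Y₂ : Arr r}
    (h₁ : SupportedOn s X₁) (h₂ : SupportedOn s X₂) (δ : Fin r → ℤ) :
    corr (fun i => X₁ i + X₂ i) (fun i => Y₁ i + Y₂ i) δ =
      corr X₁ Y₁ δ + corr X₁ Y₂ δ + corr X₂ Y₁ δ + corr X₂ Y₂ δ := by
  rw [corr_eq_sum (supported_add h₁ h₂), corr_eq_sum h₁, corr_eq_sum h₁,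
    corr_eq_sum h₂, corr_eq_sum h₂]
  rw [← Finset.sum_add_distrib, ← Finset.sum_add_distrib, ← Finset.sum_add_distrib]
  refine Finset.sum_congr rfl fun i _ => ?_
  rw [map_add]
  ring

lemma corr_sub4 {s : Fin r → ℕ} {X₁ X₂ Y₁ Y₂ : Arr r}
    (h₁ : SupportedOn s X₁) (h₂ : SupportedOn s X₂) (δ : Fin r → ℤ) :
    corr (fun i => X₁ i - X₂ i) (fun i => Y₁ i - Y₂ i) δ =
      corr X₁ Y₁ δ - corr X₁ Y₂ δ - corr X₂ Y₁ δ + corr X₂ Y₂ δ := by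
  rw [corr_eq_sum (supported_sub h₁ h₂), corr_eq_sum h₁, corr_eq_sum h₁,
    corr_eq_sum h₂, corr_eq_sum h₂]
  rw [← Finset.sum_sub_distrib, ← Finset.sum_sub_distrib, ← Finset.sum_add_distrib]
  refine Finset.sum_congr rfl fun i _ => ?_
  rw [map_sub]
  ring


/-- 0/1 integer from a boolean. -/
def cb (b : Bool) : ℤ := if b then 1 else 0

lemma scalar_block {t q j d : ℤ} (ht : 0 < t) (hj0 : 0 ≤ j) (hjt : j < t) :
    (t * q + j - d) / t = q - d / t - (if j < d % t then 1 else 0) ∧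
      (t * q + j - d) % t = j - d % t + t * (if j < d % t then 1 else 0) := by
  have hd := Int.mul_ediv_add_emod d t
  have h0 : 0 ≤ d % t := Int.emod_nonneg d (ne_of_gt ht)
  have h1 : d % t < t := Int.emod_lt_of_pos d ht
  by_cases hc : j < d % t
  · simp only [if_pos hc]
    have hkey : t * q + j - d = t * (q - d / t - 1) + (j - d % t + t * 1) := by
      linear_combination hd
    rw [hkey]
    exact ⟨block_ediv ht (by omega) (by omega), block_emod ht (by omega) (by omega)⟩
  · simp only [if_neg hc]
    have hkey : t * q + j - d = t * (q - d / t - 0) + (j - d % t + t * 0) := by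
      linear_combination hd
    rw [hkey]
    exact ⟨block_ediv ht (by omega) (by omega), block_emod ht (by omega) (by omega)⟩

lemma box_prod_sum {u t : Fin r → ℕ} (ht : ∀ k, 0 < t k) (f : (Fin r → ℤ) → ℂ) :
    ∑ i ∈ box (fun k => u k * t k), f i =
      ∑ p ∈ (box u) ×ˢ (box t), f (fun k => (t k : ℤ) * p.1 k + p.2 k) := by
  refine Finset.sum_nbij'
    (i := fun i => ((fun k => i k / (t k : ℤ)), (fun k => i k % (t k : ℤ))))
    (j := fun p => fun k => (t k : ℤ) * p.1 k + p.2 k) ?_ ?_ ?_ ?_ ?_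
  · intro i hi
    rw [mem_box] at hi
    rw [Finset.mem_product, mem_box, mem_box]
    have htk : ∀ k, (0:ℤ) < t k := fun k => by exact_mod_cast ht k
    constructor
    · intro k
      have h := hi k
      push_cast at h
      refine ⟨Int.ediv_nonneg h.1 (le_of_lt (htk k)), ?_⟩
      rw [Int.ediv_lt_iff_lt_mul (htk k)]
      nlinarith [h.1, h.2]
    · intro k
      exact ⟨Int.emod_nonneg _ (ne_of_gt (htk k)), Int.emod_lt_of_pos _ (htk k)⟩
  · intro p hp
    rw [Finset.mem_product, mem_box, mem_box] at hp
    rw [mem_box]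
    intro k
    have h1 := hp.1 k
    have h2 := hp.2 k
    push_cast
    constructor
    · nlinarith [h1.1, h2.1]
    · nlinarith [h1.2, h2.2]
  · intro i hi
    rw [mem_box] at hi
    funext k
    dsimp only
    exact Int.mul_ediv_add_emod (i k) (t k)
  · intro p hp
    rw [Finset.mem_product, mem_box, mem_box] at hp
    have htk : ∀ k, (0:ℤ) < t k := fun k => by exact_mod_cast ht k
    obtain ⟨h1, h2⟩ := hp
    refine Prod.ext ?_ ?_ <;> funext k <;> dsimp only
    · exact block_ediv (htk k) (h2 k).1 (h2 k).2
    · exact block_emod (htk k) (h2 k).1 (h2 k).2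
  · intro i _
    congr 1
    funext k
    exact (Int.mul_ediv_add_emod (i k) (t k)).symm

lemma kron_corr {u t : Fin r → ℕ} {X Y P Q : Arr r}
    (hX : SupportedOn u X) (hP : SupportedOn t P) (hQ : SupportedOn t Q) (δ : Fin r → ℤ) :
    corr (kron t X P) (kron t Y Q) δ =
      ∑ χ : Fin r → Bool, corr X Y (fun k => δ k / (t k : ℤ) + cb (χ k)) *
        corr P Q (fun k => δ k % (t k : ℤ) - (t k : ℤ) * cb (χ k)) := by
  by_cases ht : ∀ k, 0 < t k
  case neg =>
    have hP0 : ∀ i, P i = 0 := by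
      push_neg at ht
      obtain ⟨k, hk⟩ := ht
      intro i
      apply hP
      intro hbox
      have := hbox k
      omega
    have hkron : kron t X P = fun _ => 0 := by
      funext i; unfold kron; rw [hP0, mul_zero]
    have h1 : corr (kron t X P) (kron t Y Q) δ = 0 := by
      unfold corr; rw [hkron]; simp
    have h2 : ∀ w, corr P Q w = 0 := by
      intro w; unfold corr; simp [hP0]
    rw [h1]
    exact (Finset.sum_eq_zero fun χ _ => by rw [h2, mul_zero]).symm
  case pos =>
    have htk : ∀ k, (0:ℤ) < t k := fun k => by exact_mod_cast ht k
    -- rewrite LHS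
    rw [corr_eq_sum (kron_supported hX hP), box_prod_sum ht, Finset.sum_product]
    -- rewrite RHS
    have hR : ∀ χ : Fin r → Bool,
        corr X Y (fun k => δ k / (t k : ℤ) + cb (χ k)) *
          corr P Q (fun k => δ k % (t k : ℤ) - (t k : ℤ) * cb (χ k)) =
        ∑ q ∈ box u, ∑ j ∈ box t,
          (X q * (starRingEnd ℂ) (Y (q - fun k => δ k / (t k : ℤ) + cb (χ k)))) *
          (P j * (starRingEnd ℂ) (Q (j - fun k => δ k % (t k : ℤ) - (t k : ℤ) * cb (χ k)))) := by
      intro χ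
      rw [corr_eq_sum hX, corr_eq_sum hP, Finset.sum_mul_sum]
    simp only [hR]
    conv_rhs => rw [Finset.sum_comm]
    apply Finset.sum_congr rfl
    intro q hq
    conv_rhs => rw [Finset.sum_comm]
    apply Finset.sum_congr rfl
    intro j hj
    rw [mem_box] at hj
    -- per-point identity
    have hblock : ∀ k : Fin r, ((fun k => (t k : ℤ) * q k + j k) - δ) k / (t k : ℤ) =
          q k - δ k / (t k : ℤ) - (if j k < δ k % (t k : ℤ) then 1 else 0) ∧
        ((fun k => (t k : ℤ) * q k + j k) - δ) k % (t k : ℤ) =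
          j k - δ k % (t k : ℤ) + (t k : ℤ) * (if j k < δ k % (t k : ℤ) then 1 else 0) := by
      intro k
      have := scalar_block (t := (t k : ℤ)) (q := q k) (j := j k) (d := δ k)
        (htk k) (hj k).1 (hj k).2
      simpa [Pi.sub_apply] using this
    rw [Finset.sum_eq_single (fun k => decide (j k < δ k % (t k : ℤ)))]
    · -- main term equality
      unfold kron
      dsimp only
      have hq1 : (fun k => ((t k : ℤ) * q k + j k) / (t k : ℤ)) = q := by
        funext k; exact block_ediv (htk k) (hj k).1 (hj k).2
      have hq2 : (fun k => ((t k : ℤ) * q k + j k) % (t k : ℤ)) = j := by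
        funext k; exact block_emod (htk k) (hj k).1 (hj k).2
      have hy : (fun k => ((fun k => (t k : ℤ) * q k + j k) - δ) k / (t k : ℤ)) =
          (q - fun k => δ k / (t k : ℤ) + cb (decide (j k < δ k % (t k : ℤ)))) := by
        funext k
        rw [(hblock k).1]
        simp only [Pi.sub_apply, cb, decide_eq_true_eq]
        ring
      have hz : (fun k => ((fun k => (t k : ℤ) * q k + j k) - δ) k % (t k : ℤ)) =
          (j - fun k => δ k % (t k : ℤ) - (t k : ℤ) * cb (decide (j k < δ k % (t k : ℤ)))) := by
        funext k
        rw [(hblock k).2]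
        simp only [Pi.sub_apply, cb, decide_eq_true_eq]
        ring
      rw [hq1, hq2, hy, hz, map_mul]
      ring
    · -- other χ give zero
      intro χ _ hne
      have hz : Q (j - fun k => δ k % (t k : ℤ) - (t k : ℤ) * cb (χ k)) = 0 := by
        apply hQ
        intro hbox
        obtain ⟨k, hk⟩ := Function.ne_iff.1 hne
        have hb := hbox k
        simp only [Pi.sub_apply] at hb
        have hφ0 : 0 ≤ δ k % (t k : ℤ) := Int.emod_nonneg _ (ne_of_gt (htk k))
        have hφ1 : δ k % (t k : ℤ) < (t k : ℤ) := Int.emod_lt_of_pos _ (htk k)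
        have hjk := hj k
        rcases Bool.eq_false_or_eq_true (χ k) with hc | hc
        · have hd : ¬ j k < δ k % (t k : ℤ) := by
            intro hno
            exact hk (by rw [hc]; simp [hno])
          simp [cb, hc] at hb
          omega
        · have hd : j k < δ k % (t k : ℤ) := by
            by_contra hno
            exact hk (by rw [hc]; simp [hno])
          simp [cb, hc] at hb
          omega
      rw [hz, map_zero, mul_zero, mul_zero]
    · intro habs
      exact absurd (Finset.mem_univ _) habs


lemma inbox_div_mod {u t : Fin r → ℕ} {i : Fin r → ℤ}
    (h : InBox (fun k => u k * t k) i) :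
    InBox u (fun k => i k / (t k : ℤ)) ∧ InBox t (fun k => i k % (t k : ℤ)) ∧
      ∀ k, (0:ℤ) < t k := by
  have htk : ∀ k, (0:ℤ) < t k := by
    intro k
    have hk := h k
    rcases Nat.eq_zero_or_pos (t k) with h0 | h0
    · simp [h0] at hk; omega
    · exact_mod_cast h0
  refine ⟨?_, ?_, htk⟩
  · intro k
    have hk := h k
    push_cast at hk
    dsimp only
    refine ⟨Int.ediv_nonneg hk.1 (le_of_lt (htk k)), ?_⟩
    rw [Int.ediv_lt_iff_lt_mul (htk k)]
    nlinarith [hk.1, hk.2]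
  · intro k
    exact ⟨Int.emod_nonneg _ (ne_of_gt (htk k)), Int.emod_lt_of_pos _ (htk k)⟩

lemma shift_supported {s : Fin r → ℕ} {i0 : Fin r} {s' : ℕ} {Z : Arr r}
    (hZ : SupportedOn (Function.update s i0 s') Z) :
    SupportedOn (Function.update s i0 (s i0 + s'))
      (fun v => if v i0 < (s i0 : ℤ) then 0
        else Z (Function.update v i0 (v i0 - (s i0 : ℤ)))) := by
  intro v hv
  dsimp only
  by_cases hlt : v i0 < (s i0 : ℤ)
  · rw [if_pos hlt]
  · rw [if_neg hlt]
    apply hZ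
    intro hbox
    apply hv
    intro k
    by_cases hk : k = i0
    · subst hk
      have hb := hbox k
      simp only [Function.update_self] at hb
      simp only [Function.update_self]
      push_cast at hb ⊢
      omega
    · have := hbox k
      rw [Function.update_of_ne hk, Function.update_of_ne hk] at this
      rw [Function.update_of_ne hk]
      exact this

lemma combo_polyphase {s : Fin r → ℕ} {i0 : Fin r} {s' : ℕ} {t : Fin r → ℕ}
    {X Z P Q : Arr r} {σ : ℂ} {N : ℕ} (hσ : σ ^ N = 1)
    (hXs : SupportedOn s X)
    (hXr : ∀ v, InBox s v → X v ^ N = 1)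
    (hZr : ∀ v, InBox (Function.update s i0 s') v → Z v ^ N = 1)
    (hPr : ∀ j, InBox t j → P j ^ N = 1)
    (hQr : ∀ j, InBox t j → Q j ^ N = 1) :
    ∀ i, InBox (fun k => Function.update s i0 (s i0 + s') k * t k) i →
      (kron t X P i + σ * kron t (fun v => if v i0 < (s i0 : ℤ) then 0
        else Z (Function.update v i0 (v i0 - (s i0 : ℤ)))) Q i) ^ N = 1 := by
  intro i hbox
  obtain ⟨hq, hj, htk⟩ := inbox_div_mod hbox
  have hjroot := hPr _ hj
  unfold kron
  dsimp only
  by_cases hlt : i i0 / (t i0 : ℤ) < (s i0 : ℤ)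
  · rw [if_pos hlt, zero_mul, mul_zero, add_zero]
    have hqs : InBox s (fun k => i k / (t k : ℤ)) := by
      intro k
      by_cases hk : k = i0
      · subst hk; exact ⟨(hq k).1, hlt⟩
      · have := hq k
        rw [Function.update_of_ne hk] at this
        exact this
    rw [mul_pow, hXr _ hqs, hPr _ hj, one_mul]
  · rw [if_neg hlt]
    have hX0 : X (fun k => i k / (t k : ℤ)) = 0 := by
      apply hXs
      intro hbox'
      exact hlt (hbox' i0).2
    rw [hX0, zero_mul, zero_add, mul_pow, hσ, one_mul, mul_pow]
    have hzbox : InBox (Function.update s i0 s')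
        (Function.update (fun k => i k / (t k : ℤ)) i0 (i i0 / (t i0 : ℤ) - (s i0 : ℤ))) := by
      intro k
      by_cases hk : k = i0
      · subst hk
        simp only [Function.update_self]
        have h1 := hq k
        simp only [Function.update_self] at h1
        push_cast at h1 ⊢
        omega
      · simp only [Function.update_of_ne hk]
        have h1 := hq k
        rw [Function.update_of_ne hk] at h1
        exact h1
    rw [hZr _ hzbox, hQr _ hj, one_mul]

end Helpers





/-- from a polyphase GCA quad {A,B,C,D} with A,B of size s (extent s_{i0}
in dimension i0) and C,D of extent s' in dimension i0 (same extents elsewhere), and a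
polyphase GCA pair {I,J} of size t, amend A' = A|0_{s'}, B' = B|0_{s'}, C' = 0_{s_{i0}}|C,
D' = 0_{s_{i0}}|D and set E = A'⊗I + C'⊗J, F = A'⊗J* − C'⊗I*, G = B'⊗I + D'⊗J,
H = B'⊗J* − D'⊗I*. Then {E,F,G,H} is a polyphase GCA quad of size
s₁t₁×⋯×(s_{i0}+s')t_{i0}×⋯×s_r t_r. -/
theorem stmt17 {r : ℕ} (s : Fin r → ℕ) (i0 : Fin r) (s' : ℕ) (t : Fin r → ℕ)
    (A B C D I J : Arr r)
    (hA : IsPolyphase s A) (hB : IsPolyphase s B)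
    (hC : IsPolyphase (Function.update s i0 s') C)
    (hD : IsPolyphase (Function.update s i0 s') D)
    (hquad : ComplementaryQuad A B C D)
    (hI : IsPolyphase t I) (hJ : IsPolyphase t J) (hIJ : ComplementaryPair I J)
    (A' B' C' D' E F G H : Arr r)
    (hA' : A' = fun v => if v i0 < (s i0 : ℤ) then A v else 0)
    (hB' : B' = fun v => if v i0 < (s i0 : ℤ) then B v else 0)
    (hC' : C' = fun v => if v i0 < (s i0 : ℤ) then 0
      else C (Function.update v i0 (v i0 - (s i0 : ℤ))))
    (hD' : D' = fun v => if v i0 < (s i0 : ℤ) then 0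
      else D (Function.update v i0 (v i0 - (s i0 : ℤ))))
    (hE : E = fun v => kron t A' I v + kron t C' J v)
    (hF : F = fun v => kron t A' (flipConj t J) v - kron t C' (flipConj t I) v)
    (hG : G = fun v => kron t B' I v + kron t D' J v)
    (hH : H = fun v => kron t B' (flipConj t J) v - kron t D' (flipConj t I) v) :
    IsPolyphase (fun k => Function.update s i0 (s i0 + s') k * t k) E ∧
      IsPolyphase (fun k => Function.update s i0 (s i0 + s') k * t k) F ∧
      IsPolyphase (fun k => Function.update s i0 (s i0 + s') k * t k) G ∧
      IsPolyphase (fun k => Function.update s i0 (s i0 + s') k * t k) H ∧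
      ComplementaryQuad E F G H := by
  obtain ⟨hAs, Na, hNa, hAroot⟩ := hA
  obtain ⟨hBs, Nb, hNb, hBroot⟩ := hB
  obtain ⟨hCs, Nc, hNc, hCroot⟩ := hC
  obtain ⟨hDs, Nd, hNd, hDroot⟩ := hD
  obtain ⟨hIs, Ni, hNi, hIroot⟩ := hI
  obtain ⟨hJs, Nj, hNj, hJroot⟩ := hJ
  -- identification of the primed arrays
  have hA'A : A' = A := by
    rw [hA']; funext v
    by_cases h : v i0 < (s i0 : ℤ)
    · rw [if_pos h]
    · rw [if_neg h]
      symm; apply hAs; intro hbox; exact h (hbox i0).2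
  have hB'B : B' = B := by
    rw [hB']; funext v
    by_cases h : v i0 < (s i0 : ℤ)
    · rw [if_pos h]
    · rw [if_neg h]
      symm; apply hBs; intro hbox; exact h (hbox i0).2
  have hC'shift : C' = fun v => C (Function.update v i0 (v i0 - (s i0 : ℤ))) := by
    rw [hC']; funext v
    by_cases h : v i0 < (s i0 : ℤ)
    · rw [if_pos h]; symm; apply hCs; intro hbox
      have hb := hbox i0
      simp only [Function.update_self] at hb
      omega
    · rw [if_neg h]
  have hD'shift : D' = fun v => D (Function.update v i0 (v i0 - (s i0 : ℤ))) := by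
    rw [hD']; funext v
    by_cases h : v i0 < (s i0 : ℤ)
    · rw [if_pos h]; symm; apply hDs; intro hbox
      have hb := hbox i0
      simp only [Function.update_self] at hb
      omega
    · rw [if_neg h]
  -- supports
  have hsu : ∀ k, s k ≤ Function.update s i0 (s i0 + s') k := by
    intro k
    by_cases hk : k = i0
    · subst hk; rw [Function.update_self]; omega
    · rw [Function.update_of_ne hk]
  have hAu : SupportedOn (Function.update s i0 (s i0 + s')) A := supported_mono hAs hsu
  have hBu : SupportedOn (Function.update s i0 (s i0 + s')) B := supported_mono hBs hsu
  have hA'u : SupportedOn (Function.update s i0 (s i0 + s')) A' := hA'A ▸ hAu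
  have hB'u : SupportedOn (Function.update s i0 (s i0 + s')) B' := hB'B ▸ hBu
  have hC'u : SupportedOn (Function.update s i0 (s i0 + s')) C' := by
    rw [hC']; exact shift_supported hCs
  have hD'u : SupportedOn (Function.update s i0 (s i0 + s')) D' := by
    rw [hD']; exact shift_supported hDs
  have hfI : SupportedOn t (flipConj t I) := flipConj_supported hIs
  have hfJ : SupportedOn t (flipConj t J) := flipConj_supported hJs
  have hEsupp : SupportedOn (fun k => Function.update s i0 (s i0 + s') k * t k) E := by
    rw [hE]; exact supported_add (kron_supported hA'u hIs) (kron_supported hC'u hJs)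
  have hFsupp : SupportedOn (fun k => Function.update s i0 (s i0 + s') k * t k) F := by
    rw [hF]; exact supported_sub (kron_supported hA'u hfJ) (kron_supported hC'u hfI)
  have hGsupp : SupportedOn (fun k => Function.update s i0 (s i0 + s') k * t k) G := by
    rw [hG]; exact supported_add (kron_supported hB'u hIs) (kron_supported hD'u hJs)
  have hHsupp : SupportedOn (fun k => Function.update s i0 (s i0 + s') k * t k) H := by
    rw [hH]; exact supported_sub (kron_supported hB'u hfJ) (kron_supported hD'u hfI)
  -- common root exponent
  have hNpos : 0 < 2 * (Na * Nb * Nc * Nd * Ni * Nj) := by positivity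
  have hAr : ∀ v, InBox s v → A v ^ (2 * (Na * Nb * Nc * Nd * Ni * Nj)) = 1 :=
    fun v hv => pow_one_of_dvd (hAroot v hv) ⟨2 * (Nb * Nc * Nd * Ni * Nj), by ring⟩
  have hBr : ∀ v, InBox s v → B v ^ (2 * (Na * Nb * Nc * Nd * Ni * Nj)) = 1 :=
    fun v hv => pow_one_of_dvd (hBroot v hv) ⟨2 * (Na * Nc * Nd * Ni * Nj), by ring⟩
  have hCr : ∀ v, InBox (Function.update s i0 s') v →
      C v ^ (2 * (Na * Nb * Nc * Nd * Ni * Nj)) = 1 :=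
    fun v hv => pow_one_of_dvd (hCroot v hv) ⟨2 * (Na * Nb * Nd * Ni * Nj), by ring⟩
  have hDr : ∀ v, InBox (Function.update s i0 s') v →
      D v ^ (2 * (Na * Nb * Nc * Nd * Ni * Nj)) = 1 :=
    fun v hv => pow_one_of_dvd (hDroot v hv) ⟨2 * (Na * Nb * Nc * Ni * Nj), by ring⟩
  have hIr : ∀ j, InBox t j → I j ^ (2 * (Na * Nb * Nc * Nd * Ni * Nj)) = 1 :=
    fun v hv => pow_one_of_dvd (hIroot v hv) ⟨2 * (Na * Nb * Nc * Nd * Nj), by ring⟩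
  have hJr : ∀ j, InBox t j → J j ^ (2 * (Na * Nb * Nc * Nd * Ni * Nj)) = 1 :=
    fun v hv => pow_one_of_dvd (hJroot v hv) ⟨2 * (Na * Nb * Nc * Nd * Ni), by ring⟩
  have hflipbox : ∀ j : Fin r → ℤ, InBox t j → InBox t (fun k => (t k : ℤ) - 1 - j k) := by
    intro j hj k
    have := hj k
    dsimp only
    omega
  have hfIr : ∀ j, InBox t j → flipConj t I j ^ (2 * (Na * Nb * Nc * Nd * Ni * Nj)) = 1 := by
    intro j hj
    exact conj_pow_one (hIr _ (hflipbox j hj))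
  have hfJr : ∀ j, InBox t j → flipConj t J j ^ (2 * (Na * Nb * Nc * Nd * Ni * Nj)) = 1 := by
    intro j hj
    exact conj_pow_one (hJr _ (hflipbox j hj))
  have hNeven : Even (2 * (Na * Nb * Nc * Nd * Ni * Nj)) :=
    ⟨Na * Nb * Nc * Nd * Ni * Nj, by ring⟩
  have h1N : (1 : ℂ) ^ (2 * (Na * Nb * Nc * Nd * Ni * Nj)) = 1 := one_pow _
  have hm1N : (-1 : ℂ) ^ (2 * (Na * Nb * Nc * Nd * Ni * Nj)) = 1 := hNeven.neg_one_pow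
  -- complementarity
  have hquad' : ∀ e, corr A A e + corr B B e + corr C C e + corr D D e =
      if e = 0 then ((weight A + weight B + weight C + weight D : ℝ) : ℂ) else 0 := hquad
  have hIJ' : ∀ e, corr I I e + corr J J e =
      if e = 0 then ((weight I + weight J : ℝ) : ℂ) else 0 := hIJ
  have hcA : ∀ w, corr A' A' w = corr A A w := fun w => by rw [hA'A]
  have hcB : ∀ w, corr B' B' w = corr B B w := fun w => by rw [hB'B]
  have hcC : ∀ w, corr C' C' w = corr C C w := fun w => by
    rw [hC'shift]; exact corr_translate C C w
  have hcD : ∀ w, corr D' D' w = corr D D w := fun w => by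
    rw [hD'shift]; exact corr_translate D D w
  have hkey : ∀ δ : Fin r → ℤ, autocorr E δ + autocorr F δ + autocorr G δ + autocorr H δ =
      if δ = 0 then ((weight A + weight B + weight C + weight D : ℝ) : ℂ) *
        ((weight I + weight J : ℝ) : ℂ) else 0 := by
    intro δ
    have h1 : autocorr E δ = ∑ χ : Fin r → Bool,
        (corr A' A' (fun k => δ k / (t k : ℤ) + cb (χ k)) *
            corr I I (fun k => δ k % (t k : ℤ) - (t k : ℤ) * cb (χ k)) +
          corr A' C' (fun k => δ k / (t k : ℤ) + cb (χ k)) *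
            corr I J (fun k => δ k % (t k : ℤ) - (t k : ℤ) * cb (χ k)) +
          corr C' A' (fun k => δ k / (t k : ℤ) + cb (χ k)) *
            corr J I (fun k => δ k % (t k : ℤ) - (t k : ℤ) * cb (χ k)) +
          corr C' C' (fun k => δ k / (t k : ℤ) + cb (χ k)) *
            corr J J (fun k => δ k % (t k : ℤ) - (t k : ℤ) * cb (χ k))) := by
      rw [autocorr_eq_corr, hE,
        corr_add4 (kron_supported hA'u hIs) (kron_supported hC'u hJs),
        kron_corr hA'u hIs hIs, kron_corr hA'u hIs hJs,
        kron_corr hC'u hJs hIs, kron_corr hC'u hJs hJs,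
        ← Finset.sum_add_distrib, ← Finset.sum_add_distrib, ← Finset.sum_add_distrib]
    have h2 : autocorr F δ = ∑ χ : Fin r → Bool,
        (corr A' A' (fun k => δ k / (t k : ℤ) + cb (χ k)) *
            corr J J (fun k => δ k % (t k : ℤ) - (t k : ℤ) * cb (χ k)) -
          corr A' C' (fun k => δ k / (t k : ℤ) + cb (χ k)) *
            corr I J (fun k => δ k % (t k : ℤ) - (t k : ℤ) * cb (χ k)) -
          corr C' A' (fun k => δ k / (t k : ℤ) + cb (χ k)) *
            corr J I (fun k => δ k % (t k : ℤ) - (t k : ℤ) * cb (χ k)) +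
          corr C' C' (fun k => δ k / (t k : ℤ) + cb (χ k)) *
            corr I I (fun k => δ k % (t k : ℤ) - (t k : ℤ) * cb (χ k))) := by
      rw [autocorr_eq_corr, hF,
        corr_sub4 (kron_supported hA'u hfJ) (kron_supported hC'u hfI),
        kron_corr hA'u hfJ hfJ, kron_corr hA'u hfJ hfI,
        kron_corr hC'u hfI hfJ, kron_corr hC'u hfI hfI]
      simp only [corr_flipConj]
      rw [← Finset.sum_sub_distrib, ← Finset.sum_sub_distrib, ← Finset.sum_add_distrib]
    have h3 : autocorr G δ = ∑ χ : Fin r → Bool,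
        (corr B' B' (fun k => δ k / (t k : ℤ) + cb (χ k)) *
            corr I I (fun k => δ k % (t k : ℤ) - (t k : ℤ) * cb (χ k)) +
          corr B' D' (fun k => δ k / (t k : ℤ) + cb (χ k)) *
            corr I J (fun k => δ k % (t k : ℤ) - (t k : ℤ) * cb (χ k)) +
          corr D' B' (fun k => δ k / (t k : ℤ) + cb (χ k)) *
            corr J I (fun k => δ k % (t k : ℤ) - (t k : ℤ) * cb (χ k)) +
          corr D' D' (fun k => δ k / (t k : ℤ) + cb (χ k)) *
            corr J J (fun k => δ k % (t k : ℤ) - (t k : ℤ) * cb (χ k))) := by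
      rw [autocorr_eq_corr, hG,
        corr_add4 (kron_supported hB'u hIs) (kron_supported hD'u hJs),
        kron_corr hB'u hIs hIs, kron_corr hB'u hIs hJs,
        kron_corr hD'u hJs hIs, kron_corr hD'u hJs hJs,
        ← Finset.sum_add_distrib, ← Finset.sum_add_distrib, ← Finset.sum_add_distrib]
    have h4 : autocorr H δ = ∑ χ : Fin r → Bool,
        (corr B' B' (fun k => δ k / (t k : ℤ) + cb (χ k)) *
            corr J J (fun k => δ k % (t k : ℤ) - (t k : ℤ) * cb (χ k)) -
          corr B' D' (fun k => δ k / (t k : ℤ) + cb (χ k)) *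
            corr I J (fun k => δ k % (t k : ℤ) - (t k : ℤ) * cb (χ k)) -
          corr D' B' (fun k => δ k / (t k : ℤ) + cb (χ k)) *
            corr J I (fun k => δ k % (t k : ℤ) - (t k : ℤ) * cb (χ k)) +
          corr D' D' (fun k => δ k / (t k : ℤ) + cb (χ k)) *
            corr I I (fun k => δ k % (t k : ℤ) - (t k : ℤ) * cb (χ k))) := by
      rw [autocorr_eq_corr, hH,
        corr_sub4 (kron_supported hB'u hfJ) (kron_supported hD'u hfI),
        kron_corr hB'u hfJ hfJ, kron_corr hB'u hfJ hfI,
        kron_corr hD'u hfI hfJ, kron_corr hD'u hfI hfI]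
      simp only [corr_flipConj]
      rw [← Finset.sum_sub_distrib, ← Finset.sum_sub_distrib, ← Finset.sum_add_distrib]
    have hstep : autocorr E δ + autocorr F δ + autocorr G δ + autocorr H δ =
        ∑ χ : Fin r → Bool,
          ((corr A A (fun k => δ k / (t k : ℤ) + cb (χ k)) +
              corr B B (fun k => δ k / (t k : ℤ) + cb (χ k)) +
              corr C C (fun k => δ k / (t k : ℤ) + cb (χ k)) +
              corr D D (fun k => δ k / (t k : ℤ) + cb (χ k))) *
            (corr I I (fun k => δ k % (t k : ℤ) - (t k : ℤ) * cb (χ k)) +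
              corr J J (fun k => δ k % (t k : ℤ) - (t k : ℤ) * cb (χ k)))) := by
      rw [h1, h2, h3, h4, ← Finset.sum_add_distrib, ← Finset.sum_add_distrib,
        ← Finset.sum_add_distrib]
      refine Finset.sum_congr rfl fun χ _ => ?_
      simp only [hcA, hcB, hcC, hcD]
      ring
    rw [hstep]
    simp only [hquad', hIJ']
    refine (Fintype.sum_eq_single (fun _ : Fin r => false) ?_).trans ?_
    · intro χ hχ
      by_cases hone : (fun k => δ k / (t k : ℤ) + cb (χ k)) = 0
      · by_cases htwo : (fun k => δ k % (t k : ℤ) - (t k : ℤ) * cb (χ k)) = 0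
        · exfalso
          obtain ⟨k, hk⟩ := Function.ne_iff.1 hχ
          have hkt : χ k = true := by revert hk; cases χ k <;> simp
          have e1 := congrFun hone k
          have e2 := congrFun htwo k
          simp only [Pi.zero_apply, cb, hkt, if_true] at e1 e2
          rcases Nat.eq_zero_or_pos (t k) with h0 | h0
          · rw [h0] at e1 e2
            simp only [Nat.cast_zero, Int.ediv_zero, Int.emod_zero, zero_add] at e1 e2
            omega
          · have hlt : δ k % (t k : ℤ) < (t k : ℤ) :=
              Int.emod_lt_of_pos _ (by exact_mod_cast h0)
            omega
        · rw [if_neg htwo, mul_zero]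
      · rw [if_neg hone, zero_mul]
    · have hsimp1 : (fun k => δ k / (t k : ℤ) + cb ((fun _ : Fin r => false) k)) =
          fun k => δ k / (t k : ℤ) := by
        funext k; simp [cb]
      have hsimp2 : (fun k => δ k % (t k : ℤ) - (t k : ℤ) * cb ((fun _ : Fin r => false) k)) =
          fun k => δ k % (t k : ℤ) := by
        funext k; simp [cb]
      rw [hsimp1, hsimp2]
      by_cases hδ : δ = 0
      · rw [if_pos hδ]
        have hone : (fun k => δ k / (t k : ℤ)) = 0 := by
          subst hδ; funext k; simp
        have htwo : (fun k => δ k % (t k : ℤ)) = 0 := by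
          subst hδ; funext k; simp
        rw [if_pos hone, if_pos htwo]
      · rw [if_neg hδ]
        by_cases hone : (fun k => δ k / (t k : ℤ)) = 0
        · by_cases htwo : (fun k => δ k % (t k : ℤ)) = 0
          · exfalso
            apply hδ
            funext k
            have e1 := congrFun hone k
            have e2 := congrFun htwo k
            simp only [Pi.zero_apply] at e1 e2
            have hdm := Int.mul_ediv_add_emod (δ k) (t k)
            rw [e1, e2] at hdm
            simp only [mul_zero, add_zero] at hdm
            simp [← hdm]
          · rw [if_neg htwo, mul_zero]
        · rw [if_neg hone, zero_mul]
  have hW : ((weight E + weight F + weight G + weight H : ℝ) : ℂ) =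
      ((weight A + weight B + weight C + weight D : ℝ) : ℂ) *
        ((weight I + weight J : ℝ) : ℂ) := by
    have h0 := hkey 0
    rw [if_pos rfl] at h0
    rw [← h0]
    push_cast
    rw [weight_cast hEsupp, weight_cast hFsupp, weight_cast hGsupp, weight_cast hHsupp]
  refine ⟨⟨hEsupp, 2 * (Na * Nb * Nc * Nd * Ni * Nj), hNpos, ?_⟩,
    ⟨hFsupp, 2 * (Na * Nb * Nc * Nd * Ni * Nj), hNpos, ?_⟩,
    ⟨hGsupp, 2 * (Na * Nb * Nc * Nd * Ni * Nj), hNpos, ?_⟩,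
    ⟨hHsupp, 2 * (Na * Nb * Nc * Nd * Ni * Nj), hNpos, ?_⟩, ?_⟩
  · intro i hbox
    rw [hE, hA'A, hC']
    dsimp only
    have hcombo := combo_polyphase (σ := (1 : ℂ)) h1N hAs hAr hCr hIr hJr i hbox
    rw [one_mul] at hcombo
    exact hcombo
  · intro i hbox
    rw [hF, hA'A, hC']
    dsimp only
    have hcombo := combo_polyphase (σ := (-1 : ℂ)) hm1N hAs hAr hCr hfJr hfIr i hbox
    rw [neg_one_mul] at hcombo
    rw [sub_eq_add_neg]
    exact hcombo
  · intro i hbox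
    rw [hG, hB'B, hD']
    dsimp only
    have hcombo := combo_polyphase (σ := (1 : ℂ)) h1N hBs hBr hDr hIr hJr i hbox
    rw [one_mul] at hcombo
    exact hcombo
  · intro i hbox
    rw [hH, hB'B, hD']
    dsimp only
    have hcombo := combo_polyphase (σ := (-1 : ℂ)) hm1N hBs hBr hDr hfJr hfIr i hbox
    rw [neg_one_mul] at hcombo
    rw [sub_eq_add_neg]
    exact hcombo
  · intro δ
    rw [hkey δ]
    by_cases hδ : δ = 0
    · rw [if_pos hδ, if_pos hδ, hW]
    · rw [if_neg hδ, if_neg hδ]
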